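/- The pentagonator-coboundary on general pseudomodifications squares to zero: for a K-linear semigroupal 2-category, the map δ_pent defined on families 𝔫 = (𝔫_{X_1,...,X_n}) by (δ_pent 𝔫)_{X_0,...,X_n} = ⌈⌈1_{id_{X_0}} ⊗ 𝔫_{X_1,...,X_n}⌉⌉ + Σ_{i=1}^n (−1)^i ⌈⌈𝔫_{X_0,...,X_{i-1}⊗X_i,...,X_n}⌉⌉ + (−1)^{n+1} ⌈⌈𝔫_{X_0,...,X_{n-1}} ⊗ 1_{id_{X_n}}⌉⌉ satisfies δ_pent ∘ δ_pent = 0. -/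

import Mathlib

open CategoryTheory CategoryTheory.Bicategory

universe w v u

variable {C : Type u} [Bicategory.{w, v} C] [Bicategory.Strict C]

/-- A Gray semigroup structure on a strict 2-category `C`: a cubical pseudofunctor
`⊗ : C × C → C` with strictly associative action on objects and 1-morphisms (trivial
associator), trivial pentagonator, and satisfying the cocycle and interchange axioms. -/
structure GrayTensor (C : Type u) [Bicategory.{w, v} C] [Bicategory.Strict C] where
  obj : C → C → C
  map : ∀ {X X' Y Y' : C}, (X ⟶ X') → (Y ⟶ Y') → (obj X Y ⟶ obj X' Y')
  map₂ : ∀ {X X' Y Y' : C} {f f' : X ⟶ X'} {g g' : Y ⟶ Y'},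
    (f ⟶ f') → (g ⟶ g') → (map f g ⟶ map f' g')
  map₂_id : ∀ {X X' Y Y' : C} (f : X ⟶ X') (g : Y ⟶ Y'), map₂ (𝟙 f) (𝟙 g) = 𝟙 (map f g)
  map₂_vcomp : ∀ {X X' Y Y' : C} {f f' f'' : X ⟶ X'} {g g' g'' : Y ⟶ Y'}
    (τ : f ⟶ f') (τ' : f' ⟶ f'') (σ : g ⟶ g') (σ' : g' ⟶ g''),
    map₂ (τ ≫ τ') (σ ≫ σ') = map₂ τ σ ≫ map₂ τ' σ'
  map_id : ∀ X Y : C, map (𝟙 X) (𝟙 Y) = 𝟙 (obj X Y)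
  str : ∀ {X X' X'' Y Y' Y'' : C} (f : X ⟶ X') (g : Y ⟶ Y') (f' : X' ⟶ X'') (g' : Y' ⟶ Y''),
    (map f g ≫ map f' g') ≅ map (f ≫ f') (g ≫ g')
  str_natural : ∀ {X X' X'' Y Y' Y'' : C} {f₁ f₂ : X ⟶ X'} {g₁ g₂ : Y ⟶ Y'}
    {f₁' f₂' : X' ⟶ X''} {g₁' g₂' : Y' ⟶ Y''} (τ : f₁ ⟶ f₂) (σ : g₁ ⟶ g₂)
    (τ' : f₁' ⟶ f₂') (σ' : g₁' ⟶ g₂'),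
    (map₂ τ σ ▷ map f₁' g₁' ≫ map f₂ g₂ ◁ map₂ τ' σ') ≫ (str f₂ g₂ f₂' g₂').hom =
      (str f₁ g₁ f₁' g₁').hom ≫ map₂ (τ ▷ f₁' ≫ f₂ ◁ τ') (σ ▷ g₁' ≫ g₂ ◁ σ')
  str_cocycle : ∀ {X₀ X₁ X₂ X₃ Y₀ Y₁ Y₂ Y₃ : C} (f : X₀ ⟶ X₁) (g : Y₀ ⟶ Y₁)
    (f' : X₁ ⟶ X₂) (g' : Y₁ ⟶ Y₂) (f'' : X₂ ⟶ X₃) (g'' : Y₂ ⟶ Y₃),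
    (map f g ◁ (str f' g' f'' g'').hom) ≫ (str f g (f' ≫ f'') (g' ≫ g'')).hom =
      eqToHom (Bicategory.Strict.assoc (map f g) (map f' g') (map f'' g'')).symm ≫
        ((str f g f' g').hom ▷ map f'' g'') ≫ (str (f ≫ f') (g ≫ g') f'' g'').hom ≫
        eqToHom (by rw [Bicategory.Strict.assoc, Bicategory.Strict.assoc])
  cubical₁ : ∀ {X X' X'' Y Y' : C} (f : X ⟶ X') (g : Y ⟶ Y') (f' : X' ⟶ X''),
    map f g ≫ map f' (𝟙 Y') = map (f ≫ f') (g ≫ 𝟙 Y')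
  cubical₁_str : ∀ {X X' X'' Y Y' : C} (f : X ⟶ X') (g : Y ⟶ Y') (f' : X' ⟶ X''),
    (str f g f' (𝟙 Y')).hom = eqToHom (cubical₁ f g f')
  cubical₂ : ∀ {X X' Y Y' Y'' : C} (g : Y ⟶ Y') (f' : X ⟶ X') (g' : Y' ⟶ Y''),
    map (𝟙 X) g ≫ map f' g' = map (𝟙 X ≫ f') (g ≫ g')
  cubical₂_str : ∀ {X X' Y Y' Y'' : C} (g : Y ⟶ Y') (f' : X ⟶ X') (g' : Y' ⟶ Y''),
    (str (𝟙 X) g f' g').hom = eqToHom (cubical₂ g f' g')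
  objAssoc : ∀ X Y Z : C, obj X (obj Y Z) = obj (obj X Y) Z
  mapAssoc : ∀ {X X' Y Y' Z Z' : C} (f : X ⟶ X') (g : Y ⟶ Y') (h : Z ⟶ Z'),
    HEq (map f (map g h)) (map (map f g) h)
  map₂Assoc : ∀ {X X' Y Y' Z Z' : C} {f f' : X ⟶ X'} {g g' : Y ⟶ Y'} {h h' : Z ⟶ Z'}
    (τ : f ⟶ f') (σ : g ⟶ g') (ρ : h ⟶ h'),
    HEq (map₂ τ (map₂ σ ρ)) (map₂ (map₂ τ σ) ρ)
  gray : ∀ {X₀ X₁ X₂ Y₀ Y₁ Y₂ Z₀ Z₁ Z₂ : C} (f : X₀ ⟶ X₁) (f' : X₁ ⟶ X₂)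
    (g : Y₀ ⟶ Y₁) (g' : Y₁ ⟶ Y₂) (h : Z₀ ⟶ Z₁) (h' : Z₁ ⟶ Z₂),
    HEq ((str (map f g) h (map f' g') h').hom ≫ map₂ (str f g f' g').hom (𝟙 (h ≫ h')))
        ((str f (map g h) f' (map g' h')).hom ≫ map₂ (𝟙 (f ≫ f')) (str g h g' h').hom)

namespace GrayTensor

/-- The (right-nested) iterated tensor product of a nonempty tuple of objects,
encoded as a head object and a list. -/
def tObj (T : GrayTensor C) : C → List C → C
  | X, [] => X
  | X, Y :: L => T.obj X (tObj T Y L)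

lemma tObj_assoc (T : GrayTensor C) (X Y : C) (L : List C) :
    T.tObj (T.obj X Y) L = T.obj X (T.tObj Y L) := by
  cases L with
  | nil => rfl
  | cons Z L => exact (T.objAssoc X Y (T.tObj Z L)).symm

end GrayTensor
namespace GrayTensor

variable {C : Type u} [Bicategory.{w, v} C] [Bicategory.Strict C]

/-- Contraction of a tuple of objects (head plus list) at position `i`: the `i`-th and
`(i+1)`-st entries are replaced by their tensor product. -/
def ocP (T : GrayTensor C) : C → List C → ℕ → C × List C
  | X, [], _ => (X, [])
  | X, Y :: L, 0 => (T.obj X Y, L)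
  | X, Y :: L, Nat.succ j => (X, (ocP T Y L j).1 :: (ocP T Y L j).2)

lemma tObj_ocP (T : GrayTensor C) :
    ∀ (L : List C) (X : C) (j : ℕ),
      T.tObj (T.ocP X L j).1 (T.ocP X L j).2 = T.tObj X L
  | [], X, j => rfl
  | Y :: L, X, 0 => T.tObj_assoc X Y L
  | Y :: L, X, j + 1 => by
      show T.obj X (T.tObj (T.ocP Y L j).1 (T.ocP Y L j).2) = _
      rw [tObj_ocP T L Y j]
      rfl

/-- Split the last entry off a tuple of objects (head plus nonempty list). -/
def splitL : C → List C → C × List C × C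
  | X, [] => (X, [], X)
  | X, [Y] => (X, [], Y)
  | X, Y :: Z :: L =>
      let s := splitL Y (Z :: L)
      (X, s.1 :: s.2.1, s.2.2)

lemma splitL_obj (T : GrayTensor C) :
    ∀ (L : List C) (X : C), L ≠ [] →
      T.obj (T.tObj (splitL X L).1 (splitL X L).2.1) (splitL X L).2.2 = T.tObj X L
  | [], X, h => absurd rfl h
  | [Y], X, _ => rfl
  | Y :: Z :: L, X, _ => by
      show T.obj (T.obj X (T.tObj (splitL Y (Z :: L)).1 (splitL Y (Z :: L)).2.1))
          (splitL Y (Z :: L)).2.2 = _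
      rw [← T.objAssoc, splitL_obj T (Z :: L) Y (by simp)]
      rfl

variable [∀ X Y : C, Preadditive (X ⟶ Y)]

/-- A (pseudomodification-type) pentagonator cochain on a Gray semigroup: for each
tuple of objects, an endo-2-cell of the identity 1-morphism of their tensor product.
(For a Gray semigroup the reference `a`-paths `a⁽ⁿ⁾` and `⁽ⁿ⁾a` are identities.) -/
def PCochain (T : GrayTensor C) :=
  ∀ (X : C) (L : List C), 𝟙 (T.tObj X L) ⟶ 𝟙 (T.tObj X L)

/-- The pentagonator coboundary `δ_pent`, given by
`(δ𝔫)_{X₀,…,X_n} = 1_{id_{X₀}} ⊗ 𝔫_{X₁,…,X_n} + Σᵢ (−1)ⁱ 𝔫_{…,X_{i−1}⊗X_i,…}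
+ (−1)ⁿ⁺¹ 𝔫_{X₀,…,X_{n−1}} ⊗ 1_{id_{X_n}}` (the paddings `⌈⌈—⌉⌉` being trivial in a Gray
semigroup, up to the canonical reidentifications of the underlying objects). -/
def dpent (T : GrayTensor C) (m : PCochain T) : PCochain T
  | X, [] => 0
  | X, Y :: L =>
      (eqToHom (T.map_id X (T.tObj Y L)).symm ≫ T.map₂ (𝟙 (𝟙 X)) (m Y L) ≫
          eqToHom (T.map_id X (T.tObj Y L)))
      + (∑ i ∈ Finset.range (Y :: L).length, ((-1 : ℤ) ^ (i + 1)) •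
          ((cast (congrArg (fun A : C => (𝟙 A ⟶ 𝟙 A)) (T.tObj_ocP (Y :: L) X i))
            (m (T.ocP X (Y :: L) i).1 (T.ocP X (Y :: L) i).2) :
              𝟙 (T.obj X (T.tObj Y L)) ⟶ 𝟙 (T.obj X (T.tObj Y L)))))
      + ((-1 : ℤ) ^ ((Y :: L).length + 1) •
          ((cast (congrArg (fun A : C => (𝟙 A ⟶ 𝟙 A)) (T.splitL_obj (Y :: L) X (by simp)))
            (eqToHom (T.map_id _ _).symm ≫
              T.map₂ (m (splitL X (Y :: L)).1 (splitL X (Y :: L)).2.1)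
                (𝟙 (𝟙 (splitL X (Y :: L)).2.2)) ≫
              eqToHom (T.map_id _ _)) :
              𝟙 (T.obj X (T.tObj Y L)) ⟶ 𝟙 (T.obj X (T.tObj Y L)))))

end GrayTensor

set_option linter.unusedSectionVars false

section CETools
variable {C : Type u} [Bicategory.{w, v} C] [Bicategory.Strict C]

/-- transport of an endo-2-cell of an identity 1-morphism along an object equality -/
def CE {A B : C} (h : A = B) (f : 𝟙 A ⟶ 𝟙 A) : 𝟙 B ⟶ 𝟙 B :=
  cast (congrArg (fun A : C => (𝟙 A ⟶ 𝟙 A)) h) f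

lemma CE_rfl {A : C} (f : 𝟙 A ⟶ 𝟙 A) : CE rfl f = f := rfl

lemma CE_CE {A B D : C} (h₁ : A = B) (h₂ : B = D) (f : 𝟙 A ⟶ 𝟙 A) :
    CE h₂ (CE h₁ f) = CE (h₁.trans h₂) f := by subst h₁; subst h₂; rfl

lemma CE_eq_iff_heq {A B : C} (h : A = B) (f : 𝟙 A ⟶ 𝟙 A) (g : 𝟙 B ⟶ 𝟙 B) :
    CE h f = g ↔ HEq f g := by subst h; rw [CE_rfl, heq_iff_eq]

lemma id_heq {A B : C} (h : A = B) : HEq (𝟙 A) (𝟙 B) := by subst h; rfl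

lemma id2_heq {A B A' B' : C} (hA : A = A') (hB : B = B') {p : A ⟶ B} {q : A' ⟶ B'}
    (h : HEq p q) : HEq (𝟙 p) (𝟙 q) := by
  subst hA; subst hB; obtain rfl := eq_of_heq h; rfl

lemma eqToHom2_heq {A B A' B' : C} (hA : A = A') (hB : B = B')
    {p q : A ⟶ B} {p' q' : A' ⟶ B'} (hp : HEq p p') (hq : HEq q q')
    (e : p = q) (e' : p' = q') : HEq (eqToHom e) (eqToHom e') := by
  subst hA; subst hB
  obtain rfl := eq_of_heq hp; obtain rfl := eq_of_heq hq
  rfl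

/-- HEq congruence for the conjugated form `eqToHom ≫ mid ≫ eqToHom`. -/
lemma conj2_heq {A A' : C} (hA : A = A') {p q : A ⟶ A} {p' q' : A' ⟶ A'}
    (hp : HEq p p') (hq : HEq q q')
    {mid : p ⟶ q} {mid' : p' ⟶ q'} (hmid : HEq mid mid')
    (e₁ : 𝟙 A = p) (e₂ : q = 𝟙 A) (e₁' : 𝟙 A' = p') (e₂' : q' = 𝟙 A') :
    HEq (eqToHom e₁ ≫ mid ≫ eqToHom e₂) (eqToHom e₁' ≫ mid' ≫ eqToHom e₂') := by
  subst hA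
  obtain rfl := eq_of_heq hp; obtain rfl := eq_of_heq hq
  obtain rfl := eq_of_heq hmid
  rfl

end CETools

namespace GrayTensor
variable {C : Type u} [Bicategory.{w, v} C] [Bicategory.Strict C] (T : GrayTensor C)

lemma map_heq {X₁ X₂ Y₁ Y₂ X₁' X₂' Y₁' Y₂' : C}
    (hX₁ : X₁ = X₁') (hX₂ : X₂ = X₂') (hY₁ : Y₁ = Y₁') (hY₂ : Y₂ = Y₂')
    {f : X₁ ⟶ X₂} {g : Y₁ ⟶ Y₂} {p : X₁' ⟶ X₂'} {q : Y₁' ⟶ Y₂'}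
    (hf : HEq f p) (hg : HEq g q) : HEq (T.map f g) (T.map p q) := by
  subst hX₁; subst hX₂; subst hY₁; subst hY₂
  obtain rfl := eq_of_heq hf; obtain rfl := eq_of_heq hg; rfl

lemma map₂_heq {X₁ X₂ Y₁ Y₂ X₁' X₂' Y₁' Y₂' : C}
    (hX₁ : X₁ = X₁') (hX₂ : X₂ = X₂') (hY₁ : Y₁ = Y₁') (hY₂ : Y₂ = Y₂')
    {f f' : X₁ ⟶ X₂} {g g' : Y₁ ⟶ Y₂} {p p' : X₁' ⟶ X₂'} {q q' : Y₁' ⟶ Y₂'}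
    (hf : HEq f p) (hf' : HEq f' p') (hg : HEq g q) (hg' : HEq g' q')
    {τ : f ⟶ f'} {σ : g ⟶ g'} {τ' : p ⟶ p'} {σ' : q ⟶ q'}
    (hτ : HEq τ τ') (hσ : HEq σ σ') : HEq (T.map₂ τ σ) (T.map₂ τ' σ') := by
  subst hX₁; subst hX₂; subst hY₁; subst hY₂
  obtain rfl := eq_of_heq hf; obtain rfl := eq_of_heq hf'
  obtain rfl := eq_of_heq hg; obtain rfl := eq_of_heq hg'
  obtain rfl := eq_of_heq hτ; obtain rfl := eq_of_heq hσ; rfl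

/-- tensoring on the left with the identity 2-cell of `𝟙 X` -/
def Lmul (X : C) {A : C} (f : 𝟙 A ⟶ 𝟙 A) : 𝟙 (T.obj X A) ⟶ 𝟙 (T.obj X A) :=
  eqToHom (T.map_id X A).symm ≫ T.map₂ (𝟙 (𝟙 X)) f ≫ eqToHom (T.map_id X A)

/-- tensoring on the right with the identity 2-cell of `𝟙 Z` -/
def Rmul {A : C} (f : 𝟙 A ⟶ 𝟙 A) (Z : C) : 𝟙 (T.obj A Z) ⟶ 𝟙 (T.obj A Z) :=
  eqToHom (T.map_id A Z).symm ≫ T.map₂ f (𝟙 (𝟙 Z)) ≫ eqToHom (T.map_id A Z)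

lemma Lmul_CE (X : C) {A B : C} (h : A = B) (f : 𝟙 A ⟶ 𝟙 A) :
    T.Lmul X (CE h f) = CE (congrArg (T.obj X) h) (T.Lmul X f) := by subst h; rfl

lemma Rmul_CE {A B : C} (h : A = B) (f : 𝟙 A ⟶ 𝟙 A) (Z : C) :
    T.Rmul (CE h f) Z = CE (congrArg (fun W => T.obj W Z) h) (T.Rmul f Z) := by
  subst h; rfl

lemma map₂_id_comp (u : C) {Y Y' : C} {g g' g'' : Y ⟶ Y'} (a : g ⟶ g') (b : g' ⟶ g'') :
    T.map₂ (𝟙 (𝟙 u)) (a ≫ b) = T.map₂ (𝟙 (𝟙 u)) a ≫ T.map₂ (𝟙 (𝟙 u)) b := by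
  simpa using T.map₂_vcomp (𝟙 (𝟙 u)) (𝟙 (𝟙 u)) a b

lemma map₂_comp_id {Y Y' : C} {g g' g'' : Y ⟶ Y'} (a : g ⟶ g') (b : g' ⟶ g'') (u : C) :
    T.map₂ (a ≫ b) (𝟙 (𝟙 u)) = T.map₂ a (𝟙 (𝟙 u)) ≫ T.map₂ b (𝟙 (𝟙 u)) := by
  simpa using T.map₂_vcomp a b (𝟙 (𝟙 u)) (𝟙 (𝟙 u))

lemma map₂_id_eqToHom {X X' Y Y' : C} (u : X ⟶ X') {g g' : Y ⟶ Y'} (e : g = g') :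
    T.map₂ (𝟙 u) (eqToHom e) = eqToHom (by rw [e]) := by
  subst e; rw [eqToHom_refl, eqToHom_refl, T.map₂_id]

lemma map₂_eqToHom_id {X X' Y Y' : C} {f f' : X ⟶ X'} (e : f = f') (u : Y ⟶ Y') :
    T.map₂ (eqToHom e) (𝟙 u) = eqToHom (by rw [e]) := by
  subst e; rw [eqToHom_refl, eqToHom_refl, T.map₂_id]

/-- Expanded form of `Lmul X (Lmul Y f)`. -/
lemma Lmul_Lmul_exp (X Y : C) {A : C} (f : 𝟙 A ⟶ 𝟙 A) :
    T.Lmul X (T.Lmul Y f) =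
      eqToHom (by rw [T.map_id, T.map_id]) ≫
        T.map₂ (𝟙 (𝟙 X)) (T.map₂ (𝟙 (𝟙 Y)) f) ≫ eqToHom (by rw [T.map_id, T.map_id]) := by
  simp only [Lmul, map₂_id_comp, map₂_id_eqToHom]
  simp

lemma Lmul_Lmul (X Y : C) {A : C} (f : 𝟙 A ⟶ 𝟙 A) :
    T.Lmul X (T.Lmul Y f) = CE (T.objAssoc X Y A).symm (T.Lmul (T.obj X Y) f) := by
  symm; rw [CE_eq_iff_heq, Lmul_Lmul_exp]
  show HEq (T.Lmul (T.obj X Y) f) _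
  rw [Lmul]
  have hO : T.obj (T.obj X Y) A = T.obj X (T.obj Y A) := (T.objAssoc X Y A).symm
  have h1 : HEq (T.map (𝟙 (T.obj X Y)) (𝟙 A)) (T.map (𝟙 X) (T.map (𝟙 Y) (𝟙 A))) := by
    refine HEq.trans ?_ (T.mapAssoc (𝟙 X) (𝟙 Y) (𝟙 A)).symm
    exact heq_of_eq (by rw [T.map_id X Y])
  have hmid : HEq (T.map₂ (𝟙 (𝟙 (T.obj X Y))) f) (T.map₂ (𝟙 (𝟙 X)) (T.map₂ (𝟙 (𝟙 Y)) f)) := by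
    refine HEq.trans ?_ (T.map₂Assoc (𝟙 (𝟙 X)) (𝟙 (𝟙 Y)) f).symm
    refine T.map₂_heq rfl rfl rfl rfl ?_ ?_ (HEq.refl _) (HEq.refl _) ?_ (HEq.refl f)
    · exact heq_of_eq (T.map_id X Y).symm
    · exact heq_of_eq (T.map_id X Y).symm
    · exact HEq.trans (id2_heq rfl rfl (heq_of_eq (T.map_id X Y).symm))
        (heq_of_eq (T.map₂_id (𝟙 X) (𝟙 Y)).symm)
  exact conj2_heq hO h1 h1 hmid _ _ _ _

/-- Expanded form of `Rmul (Rmul f Y) Z`. -/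
lemma Rmul_Rmul_exp {A : C} (f : 𝟙 A ⟶ 𝟙 A) (Y Z : C) :
    T.Rmul (T.Rmul f Y) Z =
      eqToHom (by rw [T.map_id, T.map_id]) ≫
        T.map₂ (T.map₂ f (𝟙 (𝟙 Y))) (𝟙 (𝟙 Z)) ≫ eqToHom (by rw [T.map_id, T.map_id]) := by
  conv_lhs => rw [Rmul, Rmul, map₂_comp_id, map₂_comp_id, map₂_eqToHom_id, map₂_eqToHom_id]
  simp

lemma Rmul_Rmul {A : C} (f : 𝟙 A ⟶ 𝟙 A) (Y Z : C) :
    T.Rmul (T.Rmul f Y) Z = CE (T.objAssoc A Y Z) (T.Rmul f (T.obj Y Z)) := by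
  symm; rw [CE_eq_iff_heq, Rmul_Rmul_exp]
  show HEq (T.Rmul f (T.obj Y Z)) _
  rw [Rmul]
  have hO : T.obj A (T.obj Y Z) = T.obj (T.obj A Y) Z := T.objAssoc A Y Z
  have h1 : HEq (T.map (𝟙 A) (𝟙 (T.obj Y Z))) (T.map (T.map (𝟙 A) (𝟙 Y)) (𝟙 Z)) := by
    refine HEq.trans ?_ (T.mapAssoc (𝟙 A) (𝟙 Y) (𝟙 Z))
    exact heq_of_eq (by rw [T.map_id Y Z])
  have hmid : HEq (T.map₂ f (𝟙 (𝟙 (T.obj Y Z)))) (T.map₂ (T.map₂ f (𝟙 (𝟙 Y))) (𝟙 (𝟙 Z))) := by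
    refine HEq.trans ?_ (T.map₂Assoc f (𝟙 (𝟙 Y)) (𝟙 (𝟙 Z)))
    refine T.map₂_heq rfl rfl rfl rfl (HEq.refl _) (HEq.refl _) ?_ ?_ (HEq.refl f) ?_
    · exact heq_of_eq (T.map_id Y Z).symm
    · exact heq_of_eq (T.map_id Y Z).symm
    · exact HEq.trans (id2_heq rfl rfl (heq_of_eq (T.map_id Y Z).symm))
        (heq_of_eq (T.map₂_id (𝟙 Y) (𝟙 Z)).symm)
  exact conj2_heq hO h1 h1 hmid _ _ _ _

lemma Lmul_Rmul_exp (X : C) {A : C} (f : 𝟙 A ⟶ 𝟙 A) (Z : C) :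
    T.Lmul X (T.Rmul f Z) =
      eqToHom (by rw [T.map_id, T.map_id]) ≫
        T.map₂ (𝟙 (𝟙 X)) (T.map₂ f (𝟙 (𝟙 Z))) ≫ eqToHom (by rw [T.map_id, T.map_id]) := by
  conv_lhs => rw [Lmul, Rmul, map₂_id_comp, map₂_id_comp, map₂_id_eqToHom, map₂_id_eqToHom]
  simp

lemma Rmul_Lmul_exp (X : C) {A : C} (f : 𝟙 A ⟶ 𝟙 A) (Z : C) :
    T.Rmul (T.Lmul X f) Z =
      eqToHom (by rw [T.map_id, T.map_id]) ≫
        T.map₂ (T.map₂ (𝟙 (𝟙 X)) f) (𝟙 (𝟙 Z)) ≫ eqToHom (by rw [T.map_id, T.map_id]) := by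
  conv_lhs => rw [Rmul, Lmul, map₂_comp_id, map₂_comp_id, map₂_eqToHom_id, map₂_eqToHom_id]
  simp

lemma Lmul_Rmul (X : C) {A : C} (f : 𝟙 A ⟶ 𝟙 A) (Z : C) :
    T.Lmul X (T.Rmul f Z) = CE (T.objAssoc X A Z).symm (T.Rmul (T.Lmul X f) Z) := by
  symm; rw [CE_eq_iff_heq, Lmul_Rmul_exp, Rmul_Lmul_exp]
  have hO : T.obj (T.obj X A) Z = T.obj X (T.obj A Z) := (T.objAssoc X A Z).symm
  have h1 : HEq (T.map (T.map (𝟙 X) (𝟙 A)) (𝟙 Z)) (T.map (𝟙 X) (T.map (𝟙 A) (𝟙 Z))) :=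
    (T.mapAssoc (𝟙 X) (𝟙 A) (𝟙 Z)).symm
  exact conj2_heq hO h1 h1 (T.map₂Assoc (𝟙 (𝟙 X)) f (𝟙 (𝟙 Z))).symm _ _ _ _

section Additive
variable [∀ X Y : C, Preadditive (X ⟶ Y)]

lemma CE_zero {A B : C} (h : A = B) : CE h (0 : 𝟙 A ⟶ 𝟙 A) = 0 := by subst h; rfl

lemma CE_add {A B : C} (h : A = B) (f g : 𝟙 A ⟶ 𝟙 A) :
    CE h (f + g) = CE h f + CE h g := by subst h; rfl

lemma CE_zsmul {A B : C} (h : A = B) (n : ℤ) (f : 𝟙 A ⟶ 𝟙 A) :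
    CE h (n • f) = n • CE h f := by subst h; rfl

lemma CE_tuple (m : PCochain T) {p q : C × List C} (hpq : p = q) {B : C}
    (h1 : T.tObj p.1 p.2 = B) (h2 : T.tObj q.1 q.2 = B) :
    CE h1 (m p.1 p.2) = CE h2 (m q.1 q.2) := by subst hpq; rfl

/-- left additivity of `map₂` -/
abbrev AddL : Prop := ∀ {X X' Y Y' : C} {f f' : X ⟶ X'} {g g' : Y ⟶ Y'}
      (τ τ' : f ⟶ f') (σ : g ⟶ g'), T.map₂ (τ + τ') σ = T.map₂ τ σ + T.map₂ τ' σ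

/-- right additivity of `map₂` -/
abbrev AddR : Prop := ∀ {X X' Y Y' : C} {f f' : X ⟶ X'} {g g' : Y ⟶ Y'}
      (τ : f ⟶ f') (σ σ' : g ⟶ g'), T.map₂ τ (σ + σ') = T.map₂ τ σ + T.map₂ τ σ'


lemma map₂_zero_right (haddr : T.AddR) {X X' Y Y' : C} {f f' : X ⟶ X'} {g g' : Y ⟶ Y'} (τ : f ⟶ f') :
    T.map₂ τ (0 : g ⟶ g') = 0 := by
  have h := haddr τ (0 : g ⟶ g') 0
  rw [add_zero] at h
  exact left_eq_add.mp h

lemma map₂_zero_left (haddl : T.AddL) {X X' Y Y' : C} {f f' : X ⟶ X'} {g g' : Y ⟶ Y'} (σ : g ⟶ g') :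
    T.map₂ (0 : f ⟶ f') σ = 0 := by
  have h := haddl (0 : f ⟶ f') 0 σ
  rw [add_zero] at h
  exact left_eq_add.mp h

lemma map₂_zsmul_right (haddr : T.AddR) {X X' Y Y' : C} {f f' : X ⟶ X'} {g g' : Y ⟶ Y'}
    (τ : f ⟶ f') (n : ℤ) (σ : g ⟶ g') : T.map₂ τ (n • σ) = n • T.map₂ τ σ :=
  map_zsmul (AddMonoidHom.mk' (fun σ' : g ⟶ g' => T.map₂ τ σ') (haddr τ)) n σ

lemma map₂_zsmul_left (haddl : T.AddL) {X X' Y Y' : C} {f f' : X ⟶ X'} {g g' : Y ⟶ Y'}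
    (τ : f ⟶ f') (n : ℤ) (σ : g ⟶ g') : T.map₂ (n • τ) σ = n • T.map₂ τ σ :=
  map_zsmul (AddMonoidHom.mk' (fun τ' : f ⟶ f' => T.map₂ τ' σ) (fun a b => haddl a b σ)) n τ

lemma Lmul_zero (haddr : T.AddR) (X A : C) : T.Lmul X (0 : 𝟙 A ⟶ 𝟙 A) = 0 := by
  rw [Lmul, T.map₂_zero_right haddr]; simp

lemma Lmul_add (haddr : T.AddR) (X : C) {A : C} (f g : 𝟙 A ⟶ 𝟙 A) :
    T.Lmul X (f + g) = T.Lmul X f + T.Lmul X g := by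
  rw [Lmul, haddr]; simp [Lmul, Preadditive.comp_add, Preadditive.add_comp]

lemma Lmul_zsmul (haddr : T.AddR) (X : C) {A : C} (n : ℤ) (f : 𝟙 A ⟶ 𝟙 A) :
    T.Lmul X (n • f) = n • T.Lmul X f := by
  rw [Lmul, T.map₂_zsmul_right haddr]; simp [Lmul, Preadditive.comp_zsmul, Preadditive.zsmul_comp]

lemma Rmul_zero (haddl : T.AddL) (A Z : C) : T.Rmul (0 : 𝟙 A ⟶ 𝟙 A) Z = 0 := by
  rw [Rmul, T.map₂_zero_left haddl]; simp

lemma Rmul_add (haddl : T.AddL) {A : C} (f g : 𝟙 A ⟶ 𝟙 A) (Z : C) :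
    T.Rmul (f + g) Z = T.Rmul f Z + T.Rmul g Z := by
  rw [Rmul, haddl]; simp [Rmul, Preadditive.comp_add, Preadditive.add_comp]

lemma Rmul_zsmul (haddl : T.AddL) {A : C} (n : ℤ) (f : 𝟙 A ⟶ 𝟙 A) (Z : C) :
    T.Rmul (n • f) Z = n • T.Rmul f Z := by
  rw [Rmul, T.map₂_zsmul_left haddl]; simp [Rmul, Preadditive.comp_zsmul, Preadditive.zsmul_comp]

end Additive

/-! ### combinatorics of `ocP` and `splitL` -/

lemma ocP_len : ∀ (L : List C) (X : C) (i : ℕ), i < L.length →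
    (T.ocP X L i).2.length + 1 = L.length
  | [], _, i, h => by simp at h
  | Y :: L, X, 0, _ => by simp [ocP]
  | Y :: L, X, i + 1, h => by
    have ih := ocP_len L Y i (by simpa using h)
    simp only [ocP, List.length_cons]
    omega

lemma splitL_cons (X W : C) (Ws : List C) (h : Ws ≠ []) :
    splitL X (W :: Ws) =
      (X, (splitL W Ws).1 :: (splitL W Ws).2.1, (splitL W Ws).2.2) := by
  cases Ws with
  | nil => exact absurd rfl h
  | cons Z M => rfl

lemma splitL_len : ∀ (L : List C) (X : C), L ≠ [] →
    (splitL X L).2.1.length + 1 = L.length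
  | [], _, h => absurd rfl h
  | [Y], X, _ => rfl
  | Y :: Z :: M, X, _ => by
    have ih := splitL_len (Z :: M) Y (by simp)
    rw [splitL_cons X Y (Z :: M) (by simp)]
    simp only [List.length_cons] at ih ⊢
    omega

/-- disjoint contractions commute -/
lemma ocP_ocP : ∀ (L : List C) (X : C) (a b : ℕ), b + 2 ≤ a →
    T.ocP (T.ocP X L a).1 (T.ocP X L a).2 b =
      T.ocP (T.ocP X L b).1 (T.ocP X L b).2 (a - 1)
  | [], X, a, b, h => by simp [ocP]
  | Y :: M, X, a, b, h => by
    obtain ⟨a', rfl⟩ : ∃ a', a = a' + 2 := ⟨a - 2, by omega⟩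
    match b with
    | 0 =>
      cases M with
      | nil => simp [ocP]
      | cons Z M' => simp [ocP]
    | b' + 1 =>
      have ih := ocP_ocP M Y (a' + 1) b' (by omega)
      simp only [Nat.add_sub_cancel] at ih
      simp only [ocP, show a' + 2 - 1 = a' + 1 from rfl, ih]

/-- adjacent contractions agree up to associativity -/
lemma ocP_ocP_adj : ∀ (L : List C) (X : C) (a : ℕ),
    T.ocP (T.ocP X L (a + 1)).1 (T.ocP X L (a + 1)).2 a =
      T.ocP (T.ocP X L a).1 (T.ocP X L a).2 a
  | [], X, a => by simp [ocP]
  | Y :: M, X, 0 => by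
    cases M with
    | nil => simp [ocP]
    | cons Z M' => simp [ocP, T.objAssoc]
  | Y :: M, X, a + 1 => by
    have ih := ocP_ocP_adj M Y a
    simp only [ocP, ih]

/-- a contraction not involving the last entry commutes with splitting off the last entry -/
lemma splitL_ocP : ∀ (L : List C) (X : C) (a : ℕ), a + 1 < L.length →
    splitL (T.ocP X L a).1 (T.ocP X L a).2 =
      ((T.ocP (splitL X L).1 (splitL X L).2.1 a).1,
       (T.ocP (splitL X L).1 (splitL X L).2.1 a).2, (splitL X L).2.2)
  | [], _, a, h => by simp at h
  | [Y], X, a, h => by simp at h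
  | Y :: Z :: M, X, 0, h => by
    cases M with
    | nil => simp [ocP, splitL]
    | cons W M' => simp [ocP, splitL]
  | Y :: Z :: M, X, a + 1, h => by
    have h' : a + 2 < M.length + 2 := by simpa using h
    have harg1 : a + 1 < (Z :: M).length := by simp only [List.length_cons]; omega
    have harg2 : a < (Z :: M).length := by simp only [List.length_cons]; omega
    have ih := splitL_ocP (Z :: M) Y a harg1
    have hq : (T.ocP Y (Z :: M) a).2 ≠ [] := by
      have hl := T.ocP_len (Z :: M) Y a harg2
      intro hc; rw [hc] at hl; simp only [List.length_nil, List.length_cons] at hl; omega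
    show splitL X ((T.ocP Y (Z :: M) a).1 :: (T.ocP Y (Z :: M) a).2) = _
    rw [splitL_cons X _ _ hq, ih, splitL_cons X Y (Z :: M) (by simp)]
    simp [ocP]

/-- contracting the last two entries, then splitting -/
lemma splitL_ocP_last : ∀ (L : List C) (X : C) (a : ℕ), a + 1 = L.length → 2 ≤ L.length →
    splitL (T.ocP X L a).1 (T.ocP X L a).2 =
      ((splitL (splitL X L).1 (splitL X L).2.1).1,
       (splitL (splitL X L).1 (splitL X L).2.1).2.1,
       T.obj (splitL (splitL X L).1 (splitL X L).2.1).2.2 (splitL X L).2.2)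
  | [], _, a, ha, h2 => by simp at h2
  | [Y], X, a, ha, h2 => by simp at h2
  | [Y, Z], X, a, ha, _ => by
    obtain rfl : a = 1 := by simpa using ha
    simp [ocP, splitL]
  | Y :: Z :: W :: M, X, a, ha, _ => by
    obtain ⟨a', rfl⟩ : ∃ a', a = a' + 1 := ⟨a - 1, by simp only [List.length_cons] at ha; omega⟩
    have ih := splitL_ocP_last (Z :: W :: M) Y a' (by simp only [List.length_cons] at ha ⊢; omega) (by simp)
    have hq : (T.ocP Y (Z :: W :: M) a').2 ≠ [] := by
      have hl := T.ocP_len (Z :: W :: M) Y a' (by simp only [List.length_cons] at ha ⊢; omega)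
      intro hc; rw [hc] at hl; simp only [List.length_nil, List.length_cons] at hl; omega
    have hs : (splitL Y (Z :: W :: M)).2.1 ≠ [] := by
      have hl := splitL_len (Z :: W :: M) Y (by simp)
      intro hc; rw [hc] at hl; simp only [List.length_nil, List.length_cons] at hl; omega
    show splitL X ((T.ocP Y (Z :: W :: M) a').1 :: (T.ocP Y (Z :: W :: M) a').2) = _
    rw [splitL_cons X _ _ hq, ih, splitL_cons X Y (Z :: W :: M) (by simp),
      splitL_cons X _ _ hs]


/-! ### the faces of the pentagonator coboundary -/

variable [∀ X Y : C, Preadditive (X ⟶ Y)]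

/-- the `k`-th face term of the pentagonator coboundary -/
def face (m : PCochain T) (k : ℕ) : PCochain T
  | _, [] => 0
  | X, Y :: L' =>
    if k = 0 then T.Lmul X (m Y L')
    else if k = L'.length + 2 then
      CE (T.splitL_obj (Y :: L') X (by simp))
        (T.Rmul (m (splitL X (Y :: L')).1 (splitL X (Y :: L')).2.1) (splitL X (Y :: L')).2.2)
    else if k ≤ L'.length + 1 then
      CE (T.tObj_ocP (Y :: L') X (k - 1))
        (m (T.ocP X (Y :: L') (k - 1)).1 (T.ocP X (Y :: L') (k - 1)).2)
    else 0

lemma face_nil (m : PCochain T) (k : ℕ) (X : C) : T.face m k X [] = 0 := rfl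

lemma face_zero (m : PCochain T) (X Y : C) (L' : List C) :
    T.face m 0 X (Y :: L') = T.Lmul X (m Y L') := by simp [face]; rfl

lemma face_last (m : PCochain T) (X Y : C) (L' : List C) {k : ℕ} (hk : k = L'.length + 2) :
    T.face m k X (Y :: L') =
      CE (T.splitL_obj (Y :: L') X (by simp))
        (T.Rmul (m (splitL X (Y :: L')).1 (splitL X (Y :: L')).2.1) (splitL X (Y :: L')).2.2) := by
  subst hk; simp [face]

lemma face_mid (m : PCochain T) (X Y : C) (L' : List C) {k : ℕ}
    (h1 : k ≠ 0) (h2 : k ≤ L'.length + 1) :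
    T.face m k X (Y :: L') =
      CE (T.tObj_ocP (Y :: L') X (k - 1))
        (m (T.ocP X (Y :: L') (k - 1)).1 (T.ocP X (Y :: L') (k - 1)).2) := by
  have h3 : k ≠ L'.length + 2 := by omega
  simp only [face, if_neg h1, if_neg h3, if_pos h2]
  exact if_neg h1

lemma dpent_eq (m : PCochain T) (X : C) (L : List C) :
    T.dpent m X L = ∑ k ∈ Finset.range (L.length + 2), ((-1 : ℤ) ^ k) • T.face m k X L := by
  cases L with
  | nil => simp [dpent, face_nil]
  | cons Y L' =>
    have hm : ∀ i ∈ Finset.range (L'.length + 1),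
        ((-1 : ℤ) ^ (i + 1)) • T.face m (i + 1) X (Y :: L') =
        ((-1 : ℤ) ^ (i + 1)) • CE (T.tObj_ocP (Y :: L') X i)
          (m (T.ocP X (Y :: L') i).1 (T.ocP X (Y :: L') i).2) := by
      intro i hi
      rw [T.face_mid m X Y L' (by omega) (by simp only [Finset.mem_range] at hi; omega)]
      simp
    simp only [List.length_cons]
    rw [Finset.sum_range_succ, Finset.sum_range_succ']
    rw [Finset.sum_congr rfl hm, T.face_zero, T.face_last m X Y L' rfl]
    simp only [dpent, CE, Lmul, List.length_cons, pow_zero, one_smul]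
    abel

lemma face_sum {ι : Type} (haddl : T.AddL) (haddr : T.AddR)
    (s : Finset ι) (eps : ι → ℤ) (ms : ι → PCochain T) (k : ℕ) (X : C) (L : List C) :
    T.face (fun X' L' => ∑ i ∈ s, eps i • ms i X' L') k X L
      = ∑ i ∈ s, eps i • T.face (ms i) k X L := by
  cases L with
  | nil => simp [face_nil]; rfl
  | cons Y L' =>
    by_cases h0 : k = 0
    · subst h0
      refine (T.face_zero _ X Y L').trans ?_
      have e0 : T.Lmul X (∑ i ∈ s, eps i • ms i Y L')
          = ∑ i ∈ s, T.Lmul X (eps i • ms i Y L') :=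
        map_sum (AddMonoidHom.mk' (fun f => T.Lmul X f) (T.Lmul_add haddr X)) _ s
      rw [e0]
      refine Finset.sum_congr rfl fun i _ => ?_
      show T.Lmul X (eps i • ms i Y L') = _
      rw [T.Lmul_zsmul haddr, T.face_zero]
      rfl
    · by_cases hl : k = L'.length + 2
      · refine (T.face_last _ X Y L' hl).trans ?_
        have e1 : T.Rmul (∑ i ∈ s, eps i • ms i (splitL X (Y :: L')).1 (splitL X (Y :: L')).2.1)
              (splitL X (Y :: L')).2.2
            = ∑ i ∈ s, T.Rmul (eps i • ms i (splitL X (Y :: L')).1 (splitL X (Y :: L')).2.1)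
              (splitL X (Y :: L')).2.2 :=
          map_sum (AddMonoidHom.mk' (fun f => T.Rmul f (splitL X (Y :: L')).2.2)
            (fun f g => T.Rmul_add haddl f g _)) _ s
        rw [e1]
        have e2 : CE (T.splitL_obj (Y :: L') X (by simp))
              (∑ i ∈ s, T.Rmul (eps i • ms i (splitL X (Y :: L')).1 (splitL X (Y :: L')).2.1)
                (splitL X (Y :: L')).2.2)
            = ∑ i ∈ s, CE (T.splitL_obj (Y :: L') X (by simp))
              (T.Rmul (eps i • ms i (splitL X (Y :: L')).1 (splitL X (Y :: L')).2.1)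
                (splitL X (Y :: L')).2.2) :=
          map_sum (AddMonoidHom.mk' (fun f => CE (T.splitL_obj (Y :: L') X (by simp)) f)
            (fun f g => CE_add _ f g)) _ s
        rw [e2]
        refine Finset.sum_congr rfl fun i _ => ?_
        show CE _ (T.Rmul (eps i • ms i _ _) _) = _
        rw [T.Rmul_zsmul haddl, CE_zsmul, T.face_last _ X Y L' hl]
      · by_cases hm : k ≤ L'.length + 1
        · refine (T.face_mid _ X Y L' h0 hm).trans ?_
          have e3 : CE (T.tObj_ocP (Y :: L') X (k - 1))
                (∑ i ∈ s, eps i • ms i (T.ocP X (Y :: L') (k - 1)).1 (T.ocP X (Y :: L') (k - 1)).2)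
              = ∑ i ∈ s, CE (T.tObj_ocP (Y :: L') X (k - 1))
                (eps i • ms i (T.ocP X (Y :: L') (k - 1)).1 (T.ocP X (Y :: L') (k - 1)).2) :=
            map_sum (AddMonoidHom.mk' (fun f => CE (T.tObj_ocP (Y :: L') X (k - 1)) f)
              (fun f g => CE_add _ f g)) _ s
          rw [e3]
          refine Finset.sum_congr rfl fun i _ => ?_
          show CE _ (eps i • ms i _ _) = _
          rw [CE_zsmul, T.face_mid _ X Y L' h0 hm]
        · have : ∀ (m : PCochain T), T.face m k X (Y :: L') = 0 := by
            intro m; simp only [face, if_neg h0, if_neg hl, if_neg hm]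
            exact if_neg h0
          simp [this]
          exact this _

lemma face_ext (m₁ m₂ : PCochain T) (k : ℕ) (X : C) (L : List C)
    (H : ∀ X' L', L'.length + 1 = L.length → m₁ X' L' = m₂ X' L') :
    T.face m₁ k X L = T.face m₂ k X L := by
  cases L with
  | nil => rfl
  | cons Y L' =>
    by_cases h0 : k = 0
    · subst h0; rw [T.face_zero, T.face_zero, H Y L' (by simp)]
    · by_cases hl : k = L'.length + 2
      · rw [T.face_last _ X Y L' hl, T.face_last _ X Y L' hl,
          H _ _ (splitL_len (Y :: L') X (by simp))]
      · by_cases hm : k ≤ L'.length + 1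
        · rw [T.face_mid _ X Y L' h0 hm, T.face_mid _ X Y L' h0 hm,
            H _ _ (T.ocP_len (Y :: L') X (k - 1) (by simp only [List.length_cons]; omega))]
        · simp only [face, if_neg h0, if_neg hl, if_neg hm]
          exact (if_neg h0).trans (if_neg h0).symm

lemma face_dpent (haddl : T.AddL) (haddr : T.AddR) (m : PCochain T) (k : ℕ) (X : C)
    (L : List C) :
    T.face (T.dpent m) k X L
      = ∑ l ∈ Finset.range (L.length + 1), ((-1 : ℤ) ^ l) • T.face (T.face m l) k X L := by
  rw [T.face_ext (T.dpent m)
    (fun X' L' => ∑ l ∈ Finset.range (L.length + 1), ((-1 : ℤ) ^ l) • T.face m l X' L') k X L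
    (fun X' L' hlen => by
      rw [T.dpent_eq, show L'.length + 2 = L.length + 1 by omega])]
  exact T.face_sum haddl haddr _ _ _ k X L

lemma face_last_len (m : PCochain T) (X₀ : C) (P : List C) (hP : P ≠ []) {k : ℕ}
    (hk : k = P.length + 1) :
    T.face m k X₀ P = CE (T.splitL_obj P X₀ hP)
      (T.Rmul (m (splitL X₀ P).1 (splitL X₀ P).2.1) (splitL X₀ P).2.2) := by
  cases P with
  | nil => exact absurd rfl hP
  | cons Y L' => exact T.face_last m X₀ Y L' (by simpa using hk)

lemma face_mid_len (m : PCochain T) (X₀ : C) (P : List C) {k : ℕ}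
    (h1 : k ≠ 0) (h2 : k ≤ P.length) :
    T.face m k X₀ P = CE (T.tObj_ocP P X₀ (k - 1))
      (m (T.ocP X₀ P (k - 1)).1 (T.ocP X₀ P (k - 1)).2) := by
  cases P with
  | nil => simp at h2; omega
  | cons Y L' => exact T.face_mid m X₀ Y L' h1 (by simpa using h2)

lemma ocP_zero_fst (X Y : C) (L : List C) : (T.ocP X (Y :: L) 0).1 = T.obj X Y := rfl
lemma ocP_zero_snd (X Y : C) (L : List C) : (T.ocP X (Y :: L) 0).2 = L := rfl
lemma ocP_succ_fst (X Y : C) (L : List C) (j : ℕ) : (T.ocP X (Y :: L) (j + 1)).1 = X := rfl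
lemma ocP_succ_snd (X Y : C) (L : List C) (j : ℕ) :
    (T.ocP X (Y :: L) (j + 1)).2 = (T.ocP Y L j).1 :: (T.ocP Y L j).2 := rfl

/-- congruence for transported `Rmul`-of-cochain terms -/
lemma CE_Rmul_tuple (m : PCochain T) {t s : C × List C × C} (hts : t = s) {B : C}
    (h1 : T.obj (T.tObj t.1 t.2.1) t.2.2 = B) (h2 : T.obj (T.tObj s.1 s.2.1) s.2.2 = B) :
    CE h1 (T.Rmul (m t.1 t.2.1) t.2.2) = CE h2 (T.Rmul (m s.1 s.2.1) s.2.2) := by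
  subst hts; rfl

lemma face_face (haddl : T.AddL) (haddr : T.AddR) (m : PCochain T) (X : C) (L : List C)
    {k l : ℕ} (hlk : l < k) (hk : k ≤ L.length + 1) :
    T.face (T.face m l) k X L = T.face (T.face m (k - 1)) l X L := by
  cases L with
  | nil => rfl
  | cons Y L' =>
    simp only [List.length_cons] at hk
    by_cases hkl : k = L'.length + 2
    · -- outer face is the last one
      subst hkl
      rw [T.face_last (T.face m l) X Y L' rfl]
      cases L' with
      | nil =>
        -- l < 2
        by_cases hl0 : l = 0
        · subst hl0
          show CE _ (T.Rmul (T.face m 0 X []) Y) = _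
          rw [T.face_nil, T.Rmul_zero haddl]
          refine (CE_zero _).trans ?_
          rw [T.face_zero, T.face_nil,
            T.Lmul_zero haddr]
          rfl
        · have hl1 : l = 1 := by simp only [List.length_nil] at hlk; omega
          subst hl1
          show CE _ (T.Rmul (T.face m 1 X []) Y) = _
          rw [T.face_nil, T.Rmul_zero haddl]
          refine (CE_zero _).trans ?_
          rw [
            T.face_mid _ X Y [] (by omega) (by simp)]
          rfl
      | cons Z L'' =>
        have hsl := splitL_len (Y :: Z :: L'') X (by simp)
        by_cases hl0 : l = 0
        · subst hl0
          rw [T.face_zero, T.face_last m Y Z L'' (by simp only [List.length_cons]; omega),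
            T.Lmul_CE, T.Lmul_Rmul, CE_CE]
          rfl
        · by_cases hll : l = (Z :: L'').length + 1
          · subst hll
            rw [T.face_last_len m (splitL X (Y :: Z :: L'')).1 (splitL X (Y :: Z :: L'')).2.1
              (by intro hc; rw [hc] at hsl;
                  simp only [List.length_nil, List.length_cons] at hsl; omega)
              (by simp only [List.length_cons] at hsl ⊢; omega)]
            rw [T.Rmul_CE, T.Rmul_Rmul, CE_CE, CE_CE]
            rw [T.face_mid _ X Y (Z :: L'') (by omega) (by simp only [List.length_cons]; omega)]
            have hplen := T.ocP_len (Y :: Z :: L'') X ((Z :: L'').length + 1 - 1)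
              (by simp only [List.length_cons]; omega)
            rw [T.face_last_len m _ _
              (by intro hc; rw [hc] at hplen;
                  simp only [List.length_nil, List.length_cons] at hplen; omega)
              (by simp only [List.length_cons] at hplen ⊢; omega)]
            rw [CE_CE]
            exact T.CE_Rmul_tuple m
              ((T.splitL_ocP_last (Y :: Z :: L'') X ((Z :: L'').length + 1 - 1)
                (by simp only [List.length_cons]; omega) (by simp)).symm) _ _
          · -- 1 ≤ l ≤ (Z::L'').length : middle face of the source
            rw [T.face_mid_len m _ _ hl0
              (by simp only [List.length_cons] at hsl hlk hll ⊢; omega)]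
            rw [T.Rmul_CE, CE_CE]
            rw [T.face_mid _ X Y (Z :: L'') hl0
              (by simp only [List.length_cons] at hlk ⊢; omega)]
            have hplen := T.ocP_len (Y :: Z :: L'') X (l - 1)
              (by simp only [List.length_cons] at hlk ⊢; omega)
            rw [T.face_last_len m _ _
              (by intro hc; rw [hc] at hplen;
                  simp only [List.length_nil, List.length_cons] at hplen; omega)
              (by simp only [List.length_cons] at hplen ⊢; omega)]
            rw [CE_CE]
            exact T.CE_Rmul_tuple m
              ((T.splitL_ocP (Y :: Z :: L'') X (l - 1)
                (by simp only [List.length_cons] at hlk hll ⊢; omega)).symm) _ _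
    · -- outer face is a middle face: 1 ≤ k ≤ L'.length + 1
      have hkm : k ≤ L'.length + 1 := by omega
      rw [T.face_mid (T.face m l) X Y L' (by omega) hkm]
      by_cases hl0 : l = 0
      · subst hl0
        rw [T.face_zero]
        by_cases hk1 : k = 1
        · subst hk1
          cases L' with
          | nil => rw [T.face_nil, T.Lmul_zero haddr]; rfl
          | cons Z L'' =>
            rw [T.face_zero]
            exact (T.Lmul_Lmul X Y (m Z L'')).symm
        · obtain ⟨k', rfl⟩ : ∃ k', k = k' + 2 := ⟨k - 2, by omega⟩
          rw [T.face_mid_len m Y L' (by omega) (by omega), T.Lmul_CE]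
          rfl
      · -- both faces are middle faces
        rw [T.face_mid (T.face m (k - 1)) X Y L' hl0 (by omega)]
        have hplen := T.ocP_len (Y :: L') X (k - 1) (by simp only [List.length_cons]; omega)
        have hplen' := T.ocP_len (Y :: L') X (l - 1) (by simp only [List.length_cons]; omega)
        rw [T.face_mid_len m _ _ hl0
          (by simp only [List.length_cons] at hplen ⊢; omega)]
        rw [T.face_mid_len m _ _ (by omega)
          (by simp only [List.length_cons] at hplen' ⊢; omega)]
        rw [CE_CE, CE_CE]
        refine T.CE_tuple m ?_ _ _
        by_cases hadj : l = k - 1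
        · have e1 : k - 1 = (l - 1) + 1 := by omega
          have e2 : k - 1 - 1 = l - 1 := by omega
          rw [e2, e1]
          exact T.ocP_ocP_adj (Y :: L') X (l - 1)
        · have h12 := T.ocP_ocP (Y :: L') X (k - 1) (l - 1) (by omega)
          rw [h12]

end GrayTensor

open GrayTensor

/-- The pentagonator coboundary on general (pseudomodification) cochains squares to
zero: for a `K`-linear Gray semigroup `(C, ⊗)` (2-morphism spaces additive, tensor
product of 2-morphisms biadditive), `δ_pent ∘ δ_pent = 0`. -/
theorem dpent_dpent {C : Type u} [Bicategory.{w, v} C] [Bicategory.Strict C]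
    [∀ X Y : C, Preadditive (X ⟶ Y)] (T : GrayTensor C)
    (haddl : ∀ {X X' Y Y' : C} {f f' : X ⟶ X'} {g g' : Y ⟶ Y'}
      (τ τ' : f ⟶ f') (σ : g ⟶ g'), T.map₂ (τ + τ') σ = T.map₂ τ σ + T.map₂ τ' σ)
    (haddr : ∀ {X X' Y Y' : C} {f f' : X ⟶ X'} {g g' : Y ⟶ Y'}
      (τ : f ⟶ f') (σ σ' : g ⟶ g'), T.map₂ τ (σ + σ') = T.map₂ τ σ + T.map₂ τ σ')
    (m : PCochain T) (X : C) (L : List C) :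
    T.dpent (T.dpent m) X L = 0 := by
  have haddl' : T.AddL := fun τ τ' σ => haddl τ τ' σ
  have haddr' : T.AddR := fun τ σ σ' => haddr τ σ σ'
  rw [T.dpent_eq]
  have hface : ∀ k ∈ Finset.range (L.length + 2),
      ((-1 : ℤ) ^ k) • T.face (T.dpent m) k X L
        = ∑ l ∈ Finset.range (L.length + 1),
            ((-1 : ℤ) ^ (k + l)) • T.face (T.face m l) k X L := by
    intro k _
    rw [T.face_dpent haddl' haddr', Finset.smul_sum]
    exact Finset.sum_congr rfl fun l _ => by rw [smul_smul, ← pow_add]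
  rw [Finset.sum_congr rfl hface, ← Finset.sum_product']
  refine Finset.sum_involution
    (fun p _ => if p.2 < p.1 then (p.2, p.1 - 1) else (p.2 + 1, p.1)) ?_ ?_ ?_ ?_
  · rintro ⟨k, l⟩ hp
    simp only [Finset.mem_product, Finset.mem_range] at hp
    dsimp only
    by_cases hlt : l < k
    · rw [if_pos hlt, T.face_face haddl' haddr' m X L hlt (by omega), ← add_smul]
      have hz : ((-1 : ℤ) ^ (k + l) + (-1 : ℤ) ^ (l + (k - 1))) = 0 := by
        have he : k + l = (l + (k - 1)) + 1 := by omega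
        rw [he, pow_succ]; ring
      rw [hz, zero_smul]
    · rw [if_neg hlt]
      have h2 := T.face_face haddl' haddr' m X L (show k < l + 1 by omega) (by omega)
      rw [Nat.add_sub_cancel] at h2
      rw [h2, ← add_smul]
      have hz : ((-1 : ℤ) ^ (k + l) + (-1 : ℤ) ^ (l + 1 + k)) = 0 := by
        have he : l + 1 + k = (k + l) + 1 := by omega
        rw [he, pow_succ]; ring
      rw [hz, zero_smul]
  · rintro ⟨k, l⟩ hp hne
    dsimp only
    by_cases hlt : l < k
    · rw [if_pos hlt]
      intro hEq; rw [Prod.mk.injEq] at hEq; omega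
    · rw [if_neg hlt]
      intro hEq; rw [Prod.mk.injEq] at hEq; omega
  · rintro ⟨k, l⟩ hp
    simp only [Finset.mem_product, Finset.mem_range] at hp
    dsimp only
    by_cases hlt : l < k
    · rw [if_pos hlt]
      simp only [Finset.mem_product, Finset.mem_range]
      omega
    · rw [if_neg hlt]
      simp only [Finset.mem_product, Finset.mem_range]
      omega
  · rintro ⟨k, l⟩ hp
    dsimp only
    by_cases hlt : l < k
    · rw [if_pos hlt, if_neg (show ¬(k - 1 < l) by omega)]
      have hko : k - 1 + 1 = k := by omega
      rw [hko]
    · rw [if_neg hlt, if_pos (show k < l + 1 by omega)]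
      rfl
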